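/- There exist a constant c > 0 and a set G of irrational real numbers, each greater than 1, such that the counting function G(x) = #{g ∈ G : g ≤ x} satisfies G(x) > c·x/log x for all sufficiently large x, and the multiplicative submonoid B of ℝ generated by G satisfies |x − y| ≥ 1 for all distinct x, y ∈ B. -/

import Mathlib

noncomputable section

open Real Set

private lemma sqrt2_sq : (Real.sqrt 2) ^ 2 = 2 := Real.sq_sqrt (by norm_num)

private lemma sqrt2_lb : (1.414 : ℝ) < Real.sqrt 2 := by
  nlinarith [Real.sqrt_nonneg 2, sqrt2_sq]

private lemma sqrt2_ub : Real.sqrt 2 < 1.4143 := by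
  nlinarith [Real.sqrt_nonneg 2, sqrt2_sq]

/-- Integer combinations of `1, √2` are uniquely determined. -/
private lemma int_comb_inj {a b a' b' : ℤ}
    (h : (a:ℝ) + b * Real.sqrt 2 = a' + b' * Real.sqrt 2) : a = a' ∧ b = b' := by
  by_cases hb : b = b'
  · subst hb
    have : (a:ℝ) = a' := by linarith
    exact ⟨by exact_mod_cast this, rfl⟩
  · exfalso
    have hne : b - b' ≠ 0 := sub_ne_zero.mpr hb
    have hEq : ((b - b' : ℤ) : ℝ) * Real.sqrt 2 = ((a' - a : ℤ) : ℝ) := by push_cast; linarith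
    exact (irrational_sqrt_two.intCast_mul hne).ne_int (a' - a) hEq

/-- Norm lower bound: a nonzero element of `ℤ[√2]` times its conjugate has absolute value ≥ 1. -/
private lemma norm_ge_one {u v : ℤ} (h : (u:ℝ) + v * Real.sqrt 2 ≠ 0) :
    1 ≤ |(u:ℝ) + v * Real.sqrt 2| * |(u:ℝ) - v * Real.sqrt 2| := by
  have hid : ((u:ℝ) + v * Real.sqrt 2) * ((u:ℝ) - v * Real.sqrt 2)
      = ((u^2 - 2*v^2 : ℤ) : ℝ) := by
    push_cast
    linear_combination (-(v:ℝ)^2) * sqrt2_sq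
  have hne : u^2 - 2*v^2 ≠ 0 := by
    intro h0
    have hzero : ((u:ℝ) + v * Real.sqrt 2) * ((u:ℝ) - v * Real.sqrt 2) = 0 := by
      rw [hid, h0]; simp
    rcases mul_eq_zero.mp hzero with h1 | h2
    · exact h h1
    · by_cases hv : v = 0
      · subst hv
        simp only [Int.cast_zero, zero_mul, sub_zero] at h2
        apply h
        simp [h2]
      · have : ((v:ℤ):ℝ) * Real.sqrt 2 = ((u:ℤ):ℝ) := by linarith
        exact (irrational_sqrt_two.intCast_mul hv).ne_int u this
  have h1 : (1:ℝ) ≤ |((u^2 - 2*v^2 : ℤ) : ℝ)| := by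
    have := Int.one_le_abs hne
    calc (1:ℝ) = ((1:ℤ):ℝ) := by norm_num
    _ ≤ ((|u^2 - 2*v^2| : ℤ) : ℝ) := by exact_mod_cast this
    _ = |((u^2 - 2*v^2 : ℤ) : ℝ)| := by push_cast; rfl
  rw [← abs_mul, hid]
  exact h1

/-- The generating set: elements `a + b√2 > 1` of `ℤ[√2]` whose conjugate is
at most `1/3` in absolute value. -/
def Gset : Set ℝ :=
  {v | ∃ a b : ℤ, v = a + b * Real.sqrt 2 ∧ |(a:ℝ) - b * Real.sqrt 2| ≤ 1/3 ∧ 1 < v}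

private lemma Gset_mul {x y : ℝ} (hx : x ∈ Gset) (hy : y ∈ Gset) : x * y ∈ Gset := by
  obtain ⟨a, b, rfl, hxc, hx1⟩ := hx
  obtain ⟨c, d, rfl, hyc, hy1⟩ := hy
  refine ⟨a*c + 2*b*d, a*d + b*c, ?_, ?_, one_lt_mul hx1.le hy1⟩
  · push_cast
    linear_combination ((b:ℝ)*d) * sqrt2_sq
  · have hidc : ((a*c + 2*b*d : ℤ):ℝ) - ((a*d + b*c : ℤ):ℝ) * Real.sqrt 2
        = ((a:ℝ) - b * Real.sqrt 2) * ((c:ℝ) - d * Real.sqrt 2) := by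
      push_cast
      linear_combination (-(b:ℝ)*d) * sqrt2_sq
    rw [hidc, abs_mul]
    have := mul_le_mul hxc hyc (abs_nonneg _) (by norm_num)
    linarith

private lemma Gset_ge_three {v : ℝ} (hv : v ∈ Gset) : 3 ≤ v := by
  obtain ⟨a, b, rfl, hc, h1⟩ := hv
  have hne : (a:ℝ) + b * Real.sqrt 2 ≠ 0 := ne_of_gt (by linarith)
  have hkey := norm_ge_one hne
  have habs : |(a:ℝ) + b * Real.sqrt 2| = (a:ℝ) + b * Real.sqrt 2 := abs_of_pos (by linarith)
  rw [habs] at hkey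
  nlinarith [abs_nonneg ((a:ℝ) - b * Real.sqrt 2)]

/-- The monoid `{1} ∪ Gset`. -/
def Mset : Submonoid ℝ where
  carrier := {1} ∪ Gset
  one_mem' := Or.inl rfl
  mul_mem' := by
    rintro a b (rfl | ha) (rfl | hb)
    · rw [mul_one]; exact Set.mem_union_left _ rfl
    · rw [one_mul]; exact Set.mem_union_right _ hb
    · rw [mul_one]; exact Set.mem_union_right _ ha
    · exact Set.mem_union_right _ (Gset_mul ha hb)

/-- Separation of distinct elements of `{1} ∪ Gset`. -/
private lemma sep {x y : ℝ} (hx : x = 1 ∨ x ∈ Gset) (hy : y = 1 ∨ y ∈ Gset)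
    (hne : x ≠ y) : 1 ≤ |x - y| := by
  rcases hx with rfl | hx
  · rcases hy with rfl | hy
    · exact absurd rfl hne
    · have := Gset_ge_three hy
      rw [abs_sub_comm, abs_of_nonneg (by linarith)]
      linarith
  · rcases hy with rfl | hy
    · have := Gset_ge_three hx
      rw [abs_of_nonneg (by linarith)]
      linarith
    · obtain ⟨a, b, rfl, hxc, hx1⟩ := hx
      obtain ⟨c, d, rfl, hyc, hy1⟩ := hy
      have hform : ((a:ℝ) + b * Real.sqrt 2) - ((c:ℝ) + d * Real.sqrt 2)
          = ((a - c : ℤ):ℝ) + ((b - d : ℤ):ℝ) * Real.sqrt 2 := by push_cast; ring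
      have hconjform : ((a - c : ℤ):ℝ) - ((b - d : ℤ):ℝ) * Real.sqrt 2
          = ((a:ℝ) - b * Real.sqrt 2) - ((c:ℝ) - d * Real.sqrt 2) := by push_cast; ring
      have hne0 : ((a - c : ℤ):ℝ) + ((b - d : ℤ):ℝ) * Real.sqrt 2 ≠ 0 := by
        rw [← hform]
        exact sub_ne_zero.mpr hne
      have hkey := norm_ge_one hne0
      have hconj : |((a - c : ℤ):ℝ) - ((b - d : ℤ):ℝ) * Real.sqrt 2| ≤ 2/3 := by
        rw [hconjform]
        calc |((a:ℝ) - b * Real.sqrt 2) - ((c:ℝ) - d * Real.sqrt 2)|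
            ≤ |(a:ℝ) - b * Real.sqrt 2| + |(c:ℝ) - d * Real.sqrt 2| := abs_sub _ _
          _ ≤ 2/3 := by linarith
      rw [← hform] at hkey
      nlinarith [abs_nonneg (((a:ℝ) + b * Real.sqrt 2) - ((c:ℝ) + d * Real.sqrt 2))]

/-- For every `b` one of `b+1, b+2` multiplied by `√2` lies within `1/3` of an integer. -/
private lemma good_step (b : ℕ) : ∃ (b' : ℕ) (a : ℤ), b < b' ∧ b' ≤ b + 2 ∧
    |(b':ℝ) * Real.sqrt 2 - a| ≤ 1/3 := by
  set s := Real.sqrt 2 with hs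
  set m := round (((b:ℝ)+1) * s) with hmdef
  have hm := abs_sub_round (((b:ℝ)+1) * s)
  rw [← hmdef] at hm
  by_cases h : |((b:ℝ)+1)*s - m| ≤ 1/3
  · refine ⟨b+1, m, by omega, by omega, ?_⟩
    have : ((b+1:ℕ):ℝ) * s - (m:ℝ) = ((b:ℝ)+1)*s - m := by push_cast; ring
    rw [this]; exact h
  · push_neg at h
    have hm2 := abs_le.mp hm
    by_cases hr : 0 ≤ ((b:ℝ)+1)*s - m
    · have h3 : 1/3 < ((b:ℝ)+1)*s - m := by rwa [abs_of_nonneg hr] at h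
      refine ⟨b+2, m+2, by omega, by omega, ?_⟩
      have heq : ((b+2:ℕ):ℝ) * s - ((m+2:ℤ):ℝ) = (((b:ℝ)+1)*s - m) + s - 2 := by
        push_cast; ring
      rw [heq, abs_le]
      constructor <;> nlinarith [sqrt2_lb, sqrt2_ub]
    · push_neg at hr
      have h3 : ((b:ℝ)+1)*s - m < -(1/3) := by
        rcases abs_cases (((b:ℝ)+1)*s - m) with ⟨he, _⟩ | ⟨he, _⟩
        · linarith
        · linarith
      refine ⟨b+2, m+1, by omega, by omega, ?_⟩
      have heq : ((b+2:ℕ):ℝ) * s - ((m+1:ℤ):ℝ) = (((b:ℝ)+1)*s - m) + s - 1 := by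
        push_cast; ring
      rw [heq, abs_le]
      constructor <;> nlinarith [sqrt2_lb, sqrt2_ub]

private lemma count_lb {x : ℝ} (hx : 7 ≤ x) :
    (⌊x/7⌋₊ : ℝ) ≤ ((Gset ∩ Set.Iic x).ncard : ℝ) := by
  choose bf af hlt hle hgood using good_step
  set n := ⌊x/7⌋₊ with hn
  set f : ℕ → ℝ := fun k => ((af (2*k) : ℝ) + (bf (2*k) : ℝ) * Real.sqrt 2) with hf
  have hb1 : ∀ k, (1:ℝ) ≤ (bf (2*k) : ℝ) := by
    intro k
    have h := hlt (2*k)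
    have h' : (1:ℕ) ≤ bf (2*k) := by omega
    exact_mod_cast h'
  have hmemG : ∀ k, f k ∈ Gset := by
    intro k
    have h1 := abs_le.mp (hgood (2*k))
    refine ⟨af (2*k), (bf (2*k) : ℤ), ?_, ?_, ?_⟩
    · simp only [hf]; push_cast; ring
    · rw [abs_sub_comm]
      push_cast
      exact hgood (2*k)
    · have h2 := hb1 k
      have h3 : (1:ℝ)*1.414 ≤ (bf (2*k) : ℝ) * Real.sqrt 2 :=
        mul_le_mul h2 sqrt2_lb.le (by norm_num) (by linarith)
      simp only [hf]
      linarith [h1.2]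
  have hlex : ∀ k < n, f k ≤ x := by
    intro k hk
    have h1 := abs_le.mp (hgood (2*k))
    have hble : (bf (2*k) : ℝ) ≤ 2 * (n:ℝ) := by
      have h2 : bf (2*k) ≤ 2*n := by have := hle (2*k); omega
      exact_mod_cast h2
    have hns : ((n:ℝ)) ≤ x / 7 := Nat.floor_le (by positivity)
    have hprod : (bf (2*k) : ℝ) * Real.sqrt 2 ≤ (2 * (n:ℝ)) * 1.4143 :=
      mul_le_mul hble sqrt2_ub.le (Real.sqrt_nonneg 2) (by positivity)
    simp only [hf]
    linarith [h1.1]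
  have hinj : Set.InjOn f ↑(Finset.range n) := by
    intro k _ k' _ hkk
    simp only [hf] at hkk
    have hkk' : ((af (2*k)):ℝ) + (((bf (2*k) : ℤ)):ℝ) * Real.sqrt 2
        = ((af (2*k')):ℝ) + (((bf (2*k') : ℤ)):ℝ) * Real.sqrt 2 := by
      push_cast
      exact hkk
    have h := int_comb_inj hkk'
    have hb : bf (2*k) = bf (2*k') := by exact_mod_cast h.2
    have l1 := hlt (2*k); have l2 := hle (2*k)
    have l3 := hlt (2*k'); have l4 := hle (2*k')
    omega
  have hsub : f '' ↑(Finset.range n) ⊆ Gset ∩ Set.Iic x := by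
    rintro v ⟨k, hk, rfl⟩
    simp only [Finset.coe_range, Set.mem_Iio] at hk
    exact ⟨hmemG k, hlex k hk⟩
  have hfin : (Gset ∩ Set.Iic x).Finite := by
    apply Set.Finite.subset (Set.Finite.image
      (fun p : ℤ × ℤ => (p.1 : ℝ) + p.2 * Real.sqrt 2)
      (((Set.finite_Icc (-(⌈x⌉)) ⌈x⌉).prod (Set.finite_Icc (-(⌈x⌉)) ⌈x⌉))))
    rintro v ⟨⟨a, b, rfl, hc, h1⟩, hvx⟩
    have hc2 := abs_le.mp hc
    have hvx' : (a:ℝ) + b * Real.sqrt 2 ≤ x := hvx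
    have hax : (a:ℝ) ≤ x := by linarith
    have ha0 : (0:ℝ) ≤ (a:ℝ) := by linarith
    have hbs : (0:ℝ) < (b:ℝ) * Real.sqrt 2 := by linarith
    have hb0 : (0:ℝ) ≤ (b:ℝ) := by nlinarith [Real.sqrt_nonneg 2, sqrt2_lb]
    have hbx : (b:ℝ) ≤ x := by nlinarith [sqrt2_lb]
    have hceil : x ≤ (⌈x⌉:ℝ) := Int.le_ceil x
    refine ⟨(a, b), ⟨⟨?_, ?_⟩, ?_, ?_⟩, rfl⟩
    · have : ((-(⌈x⌉):ℤ):ℝ) ≤ (a:ℝ) := by push_cast; linarith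
      exact_mod_cast this
    · have : (a:ℝ) ≤ ((⌈x⌉:ℤ):ℝ) := by push_cast; linarith
      exact_mod_cast this
    · have : ((-(⌈x⌉):ℤ):ℝ) ≤ (b:ℝ) := by push_cast; linarith
      exact_mod_cast this
    · have : (b:ℝ) ≤ ((⌈x⌉:ℤ):ℝ) := by push_cast; linarith
      exact_mod_cast this
  have hcard : n ≤ (Gset ∩ Set.Iic x).ncard := by
    calc n = (↑(Finset.range n) : Set ℕ).ncard := by
            rw [Set.ncard_coe_finset, Finset.card_range]
      _ = (f '' ↑(Finset.range n)).ncard := (Set.ncard_image_of_injOn hinj).symm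
      _ ≤ (Gset ∩ Set.Iic x).ncard := Set.ncard_le_ncard hsub hfin
  exact_mod_cast hcard

/-- **Theorem 6 (Ruzsa).** There is a set `G` of irrational reals greater than `1` whose
counting function satisfies `G(x) > c·x / log x` for large `x` (for some constant `c > 0`)
and whose generated multiplicative monoid is `1`-separated. -/
theorem stmt_6 : ∃ c : ℝ, 0 < c ∧ ∃ G : Set ℝ,
    (∀ g ∈ G, Irrational g ∧ 1 < g) ∧
    (∃ x₀ : ℝ, ∀ x ≥ x₀, c * x / Real.log x < ((G ∩ Set.Iic x).ncard : ℝ)) ∧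
    (∀ x ∈ Submonoid.closure G, ∀ y ∈ Submonoid.closure G, x ≠ y → 1 ≤ |x - y|) := by
  refine ⟨1, one_pos, Gset, ?_, ?_, ?_⟩
  · rintro g ⟨a, b, rfl, hc, h1⟩
    have hb : b ≠ 0 := by
      rintro rfl
      simp only [Int.cast_zero, zero_mul, sub_zero, add_zero] at hc h1
      have := abs_le.mp hc
      linarith
    exact ⟨(irrational_sqrt_two.intCast_mul hb).intCast_add a, h1⟩
  · refine ⟨Real.exp 10, fun x hx => ?_⟩
    have hexp5 : (6:ℝ) ≤ Real.exp 5 := by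
      have := Real.add_one_le_exp (5:ℝ); linarith
    have hexp10 : (36:ℝ) ≤ Real.exp 10 := by
      have h : Real.exp 10 = Real.exp 5 * Real.exp 5 := by
        rw [← Real.exp_add]; norm_num
      nlinarith
    have hx36 : (36:ℝ) ≤ x := le_trans hexp10 hx
    have hxpos : (0:ℝ) < x := by linarith
    have hlog : (10:ℝ) ≤ Real.log x := by
      have h := Real.log_le_log (Real.exp_pos 10) hx
      rwa [Real.log_exp] at h
    have hcount := count_lb (by linarith : (7:ℝ) ≤ x)
    have hfloor : x/7 - 1 < (⌊x/7⌋₊ : ℝ) := by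
      have := Nat.lt_floor_add_one (x/7)
      linarith
    have h1 : 1 * x / Real.log x ≤ x / 10 := by
      rw [one_mul]
      apply div_le_div_of_nonneg_left hxpos.le (by norm_num) hlog
    have h2 : x / 10 < x/7 - 1 := by linarith
    linarith
  · have hsub : Submonoid.closure Gset ≤ Mset :=
      Submonoid.closure_le.mpr (fun g hg => Set.mem_union_right _ hg)
    intro x hx y hy hne
    have hx' : x ∈ ({1} ∪ Gset : Set ℝ) := hsub hx
    have hy' : y ∈ ({1} ∪ Gset : Set ℝ) := hsub hy
    refine sep ?_ ?_ hne
    · rcases hx' with h | h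
      · exact Or.inl h
      · exact Or.inr h
    · rcases hy' with h | h
      · exact Or.inl h
      · exact Or.inr h
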